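/- Suppose H₁ : [0,T] → Mat_n(ℂ) is continuous Hermitian-valued and satisfies ‖H₁(t) - Λ(t)H‖_F ≤ ε for all t, where H is a fixed Hermitian matrix with ‖H‖_F = 1 and Λ : [0,T] → ℝ₊ is continuous. Let U solve U' = -iH₁U, U(0)=𝟙. Then ∫₀ᵗ Λ(s) ds - d_F(U(t), 𝟙) ≤ d_F(U(t), exp(-i ∫₀ᵗ Λ(s)ds · H)) + (∫₀ᵗ Λ(s) ds - d_F(exp(-i∫₀ᵗΛ(s)ds·H), 𝟙)) ≤ ε t + (∫₀ᵗ Λ(s)ds - d_F(exp(-i∫₀ᵗΛ(s)ds·H), 𝟙)). -/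

import Mathlib

open Matrix MeasureTheory Set

attribute [local instance] Matrix.frobeniusNormedAddCommGroup Matrix.frobeniusNormedSpace
  Matrix.frobeniusNormedRing Matrix.frobeniusNormedAlgebra

/-- Frobenius norm of a complex matrix. -/
noncomputable def frob {n : ℕ} (A : Matrix (Fin n) (Fin n) ℂ) : ℝ :=
  Real.sqrt (∑ i, ∑ j, ‖A i j‖ ^ 2)

variable {n : ℕ}

lemma frob_eq_norm (A : Matrix (Fin n) (Fin n) ℂ) : frob A = ‖A‖ := by
  rw [frob, Matrix.frobenius_norm_def, Real.sqrt_eq_rpow]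
  congr 1
  refine Finset.sum_congr rfl fun i _ => Finset.sum_congr rfl fun j _ => ?_
  rw [← Real.rpow_natCast ‖A i j‖ 2]
  norm_num

lemma frob_nonneg (A : Matrix (Fin n) (Fin n) ℂ) : 0 ≤ frob A := Real.sqrt_nonneg _

lemma frob_smul (c : ℂ) (A : Matrix (Fin n) (Fin n) ℂ) : frob (c • A) = ‖c‖ * frob A := by
  rw [frob_eq_norm, frob_eq_norm, norm_smul]

lemma frob_smul_real (c : ℝ) (A : Matrix (Fin n) (Fin n) ℂ) : frob (c • A) = |c| * frob A := by
  rw [frob_eq_norm, frob_eq_norm, norm_smul, Real.norm_eq_abs]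

lemma frob_continuous : Continuous (frob (n := n)) := by
  have : (frob (n := n)) = fun A => ‖A‖ := funext frob_eq_norm
  rw [this]; exact continuous_norm

lemma sq_frob_eq_trace (A : Matrix (Fin n) (Fin n) ℂ) :
    frob A ^ 2 = (Matrix.trace (Aᴴ * A)).re := by
  have h1 : frob A ^ 2 = ∑ i, ∑ j, ‖A i j‖ ^ 2 :=
    Real.sq_sqrt (Finset.sum_nonneg fun i _ => Finset.sum_nonneg fun j _ => sq_nonneg _)
  rw [h1, Matrix.trace]
  rw [Complex.re_sum]
  rw [Finset.sum_comm]
  refine Finset.sum_congr rfl fun j _ => ?_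
  simp only [Matrix.diag_apply, Matrix.mul_apply, Matrix.conjTranspose_apply, Complex.re_sum]
  refine Finset.sum_congr rfl fun i _ => ?_
  have : (starRingEnd ℂ) (A i j) * A i j = (Complex.normSq (A i j) : ℂ) := by
    rw [mul_comm, Complex.mul_conj]
  rw [show star (A i j) = (starRingEnd ℂ) (A i j) from rfl, this]
  simp [Complex.normSq_eq_norm_sq, ← Complex.ofReal_pow]

lemma frob_eq_of_sq_eq {A B : Matrix (Fin n) (Fin n) ℂ} (h : frob A ^ 2 = frob B ^ 2) :
    frob A = frob B := by
  nlinarith [frob_nonneg A, frob_nonneg B]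

lemma frob_unitary_left {V : Matrix (Fin n) (Fin n) ℂ} (hV : V ∈ Matrix.unitaryGroup (Fin n) ℂ)
    (A : Matrix (Fin n) (Fin n) ℂ) : frob (V * A) = frob A := by
  refine frob_eq_of_sq_eq ?_
  rw [sq_frob_eq_trace, sq_frob_eq_trace, Matrix.conjTranspose_mul]
  have h : Vᴴ * V = 1 := by
    have := Matrix.mem_unitaryGroup_iff'.mp hV
    simpa [Matrix.star_eq_conjTranspose] using this
  rw [show Aᴴ * Vᴴ * (V * A) = Aᴴ * (Vᴴ * V) * A by noncomm_ring, h, Matrix.mul_one]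

lemma frob_unitary_right {V : Matrix (Fin n) (Fin n) ℂ} (hV : V ∈ Matrix.unitaryGroup (Fin n) ℂ)
    (A : Matrix (Fin n) (Fin n) ℂ) : frob (A * V) = frob A := by
  refine frob_eq_of_sq_eq ?_
  rw [sq_frob_eq_trace, sq_frob_eq_trace, Matrix.conjTranspose_mul]
  have h : V * Vᴴ = 1 := by
    have := Matrix.mem_unitaryGroup_iff.mp hV
    simpa [Matrix.star_eq_conjTranspose] using this
  rw [show Vᴴ * Aᴴ * (A * V) = Vᴴ * (Aᴴ * A) * V by noncomm_ring]
  rw [Matrix.trace_mul_cycle, h, Matrix.one_mul]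


/-- A smooth bump: positive on (0,1), zero outside. -/
noncomputable def bump (x : ℝ) : ℝ := Real.smoothTransition x * Real.smoothTransition (1 - x)

lemma bump_continuous : Continuous bump :=
  (Real.smoothTransition.continuous).mul
    (Real.smoothTransition.continuous.comp (continuous_const.sub continuous_id))

lemma bump_nonneg (x : ℝ) : 0 ≤ bump x :=
  mul_nonneg (Real.smoothTransition.nonneg _) (Real.smoothTransition.nonneg _)

lemma bump_zero_of_nonpos {x : ℝ} (h : x ≤ 0) : bump x = 0 := by
  simp [bump, Real.smoothTransition.zero_of_nonpos h]

lemma bump_zero_of_one_le {x : ℝ} (h : 1 ≤ x) : bump x = 0 := by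
  simp [bump, Real.smoothTransition.zero_of_nonpos (by linarith : 1 - x ≤ 0)]

/-- Normalizing constant. -/
noncomputable def bumpC : ℝ := ∫ u in (0:ℝ)..1, bump u

lemma bumpC_pos : 0 < bumpC := by
  refine intervalIntegral.intervalIntegral_pos_of_pos_on
    (bump_continuous.intervalIntegrable 0 1) (fun x hx => ?_) one_pos
  exact mul_pos (Real.smoothTransition.pos_of_pos hx.1)
    (Real.smoothTransition.pos_of_pos (by linarith [hx.2]))

/-- Smooth nondecreasing reparametrization: 0 on `(-∞,0]`, 1 on `[1,∞)`. -/
noncomputable def rpm (s : ℝ) : ℝ := (∫ u in (0:ℝ)..s, bump u) / bumpC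

lemma rpm_hasDerivAt (s : ℝ) : HasDerivAt rpm (bump s / bumpC) s := by
  have h : HasDerivAt (fun x => ∫ u in (0:ℝ)..x, bump u) (bump s) s :=
    intervalIntegral.integral_hasDerivAt_right (bump_continuous.intervalIntegrable 0 s)
      (bump_continuous.stronglyMeasurableAtFilter _ _) bump_continuous.continuousAt
  exact h.div_const bumpC

lemma rpm_deriv_cont : Continuous (fun s => bump s / bumpC) :=
  bump_continuous.div_const _

lemma rpm_zero : rpm 0 = 0 := by simp [rpm]

lemma rpm_of_nonpos {s : ℝ} (h : s ≤ 0) : rpm s = 0 := by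
  have : (∫ u in (0:ℝ)..s, bump u) = ∫ u in (0:ℝ)..s, (0:ℝ) := by
    refine intervalIntegral.integral_congr fun x hx => ?_
    rw [uIcc_of_ge h] at hx
    exact bump_zero_of_nonpos (hx.2)
  simp [rpm, this]

lemma rpm_one : rpm 1 = 1 := by
  rw [rpm]; rw [div_eq_one_iff_eq bumpC_pos.ne']; rfl

lemma rpm_of_one_le {s : ℝ} (h : 1 ≤ s) : rpm s = 1 := by
  have h2 : (∫ u in (1:ℝ)..s, bump u) = ∫ u in (1:ℝ)..s, (0:ℝ) := by
    refine intervalIntegral.integral_congr fun x hx => ?_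
    rw [uIcc_of_le h] at hx
    exact bump_zero_of_one_le hx.1
  have h3 : (∫ u in (0:ℝ)..s, bump u) = (∫ u in (0:ℝ)..1, bump u) + ∫ u in (1:ℝ)..s, bump u :=
    (intervalIntegral.integral_add_adjacent_intervals (bump_continuous.intervalIntegrable 0 1)
      (bump_continuous.intervalIntegrable 1 s)).symm
  rw [rpm, h3, h2]
  simp only [intervalIntegral.integral_zero, add_zero]
  exact div_self (by rw [show (∫ u in (0:ℝ)..1, bump u) = bumpC from rfl]; exact bumpC_pos.ne')

lemma rpm_monotone : Monotone rpm := by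
  have : ∀ x, 0 ≤ bump x / bumpC := fun x => div_nonneg (bump_nonneg x) bumpC_pos.le
  exact monotone_of_deriv_nonneg (fun x => (rpm_hasDerivAt x).differentiableAt)
    (fun x => by rw [(rpm_hasDerivAt x).deriv]; exact this x)

lemma rpm_mem_Icc (s : ℝ) : rpm s ∈ Icc (0:ℝ) 1 := by
  constructor
  · rcases le_or_gt s 0 with h | h
    · rw [rpm_of_nonpos h]
    · rw [← rpm_zero]; exact rpm_monotone h.le
  · rcases le_or_gt 1 s with h | h
    · rw [rpm_of_one_le h]
    · rw [← rpm_one]; exact rpm_monotone h.le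

lemma rpm_deriv_nonneg (s : ℝ) : 0 ≤ bump s / bumpC :=
  div_nonneg (bump_nonneg s) bumpC_pos.le

lemma rpm_continuous : Continuous rpm :=
  continuous_iff_continuousAt.mpr fun x => (rpm_hasDerivAt x).differentiableAt.continuousAt

/-- Riemannian distance on the unitary group induced by the Frobenius (Killing) metric. -/
noncomputable def dF {n : ℕ} (U V : Matrix (Fin n) (Fin n) ℂ) : ℝ :=
  sInf { l : ℝ | ∃ γ : ℝ → Matrix (Fin n) (Fin n) ℂ,
    γ 0 = U ∧ γ 1 = V ∧ (∀ t, γ t ∈ Matrix.unitaryGroup (Fin n) ℂ) ∧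
    (∀ t, DifferentiableAt ℝ γ t) ∧ Continuous (deriv γ) ∧
    l = ∫ s in (0:ℝ)..(1:ℝ), frob (deriv γ s) }




/-- The set of lengths of admissible paths from `A` to `B`. -/
def PathSet (A B : Matrix (Fin n) (Fin n) ℂ) : Set ℝ :=
  { l : ℝ | ∃ γ : ℝ → Matrix (Fin n) (Fin n) ℂ,
    γ 0 = A ∧ γ 1 = B ∧ (∀ t, γ t ∈ Matrix.unitaryGroup (Fin n) ℂ) ∧
    (∀ t, DifferentiableAt ℝ γ t) ∧ Continuous (deriv γ) ∧
    l = ∫ s in (0:ℝ)..(1:ℝ), frob (deriv γ s) }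

lemma pathSet_nonneg {A B : Matrix (Fin n) (Fin n) ℂ} {l : ℝ} (hl : l ∈ PathSet A B) : 0 ≤ l := by
  obtain ⟨γ, -, -, -, -, -, rfl⟩ := hl
  exact intervalIntegral.integral_nonneg (by norm_num) (fun u _ => frob_nonneg _)

lemma pathSet_bddBelow (A B : Matrix (Fin n) (Fin n) ℂ) : BddBelow (PathSet A B) :=
  ⟨0, fun l hl => pathSet_nonneg hl⟩

lemma frob_zero : frob (0 : Matrix (Fin n) (Fin n) ℂ) = 0 := by
  rw [frob_eq_norm, norm_zero]

/-- Concatenation of two reversed/forward paths: from `B` back to `A`, then on to `C`. -/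
lemma pathSet_concat {A B C : Matrix (Fin n) (Fin n) ℂ} {l₁ l₂ : ℝ}
    (h₁ : l₁ ∈ PathSet A B) (h₂ : l₂ ∈ PathSet A C) : l₁ + l₂ ∈ PathSet B C := by
  obtain ⟨γ₁, g10, g11, g1u, g1d, g1c, rfl⟩ := h₁
  obtain ⟨γ₂, g20, g21, g2u, g2d, g2c, rfl⟩ := h₂
  set θ : ℝ → ℝ := fun s => 1 - rpm (2 * s) with hθdef
  set σ : ℝ → ℝ := fun s => rpm (2 * s - 1) with hσdef
  set θ' : ℝ → ℝ := fun s => -(bump (2 * s) / bumpC * 2) with hθ'def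
  set σ' : ℝ → ℝ := fun s => bump (2 * s - 1) / bumpC * 2 with hσ'def
  have hθ : ∀ s, HasDerivAt θ (θ' s) s := by
    intro s
    have h0 : HasDerivAt (fun x : ℝ => 2 * x) 2 s := by
      simpa using (hasDerivAt_id s).const_mul 2
    exact ((rpm_hasDerivAt (2 * s)).comp s h0).const_sub 1
  have hσ : ∀ s, HasDerivAt σ (σ' s) s := by
    intro s
    have h0 : HasDerivAt (fun x : ℝ => 2 * x - 1) 2 s := by
      simpa using ((hasDerivAt_id s).const_mul 2).sub_const 1
    exact (rpm_hasDerivAt (2 * s - 1)).comp s h0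
  have hθ0 : θ 0 = 1 := by simp [hθdef, rpm_zero]
  have hθh : θ (1/2) = 0 := by norm_num [hθdef, rpm_one]
  have hσh : σ (1/2) = 0 := by norm_num [hσdef, rpm_zero]
  have hσ1 : σ 1 = 1 := by norm_num [hσdef, rpm_one]
  have hθ'h : θ' (1/2) = 0 := by norm_num [hθ'def, bump_zero_of_one_le le_rfl]
  have hσ'h : σ' (1/2) = 0 := by norm_num [hσ'def, bump_zero_of_nonpos le_rfl]
  set η : ℝ → Matrix (Fin n) (Fin n) ℂ :=
    fun s => if s ≤ 1/2 then γ₁ (θ s) else γ₂ (σ s) with hηdef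
  set D : ℝ → Matrix (Fin n) (Fin n) ℂ :=
    fun s => if s ≤ 1/2 then θ' s • deriv γ₁ (θ s) else σ' s • deriv γ₂ (σ s) with hDdef
  have hL : ∀ s, HasDerivAt (fun x => γ₁ (θ x)) (θ' s • deriv γ₁ (θ s)) s :=
    fun s => ((g1d (θ s)).hasDerivAt).scomp s (hθ s)
  have hR : ∀ s, HasDerivAt (fun x => γ₂ (σ x)) (σ' s • deriv γ₂ (σ s)) s :=
    fun s => ((g2d (σ s)).hasDerivAt).scomp s (hσ s)
  have hηD : ∀ s, HasDerivAt η (D s) s := by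
    intro s
    rcases lt_trichotomy s (1/2) with hs | hs | hs
    · have hev : η =ᶠ[nhds s] fun x => γ₁ (θ x) := by
        filter_upwards [Iio_mem_nhds hs] with x hx
        show (if x ≤ 1/2 then γ₁ (θ x) else γ₂ (σ x)) = γ₁ (θ x)
        rw [if_pos (le_of_lt (mem_Iio.mp hx))]
      rw [hDdef]
      simp only [if_pos hs.le]
      exact (hL s).congr_of_eventuallyEq hev
    · subst hs
      have hD0 : D (1/2) = 0 := by
        show (if (1/2:ℝ) ≤ 1/2 then θ' (1/2) • deriv γ₁ (θ (1/2))
          else σ' (1/2) • deriv γ₂ (σ (1/2))) = 0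
        rw [if_pos le_rfl, hθ'h, zero_smul]
      rw [hD0]
      have hleft : HasDerivWithinAt η 0 (Iic (1/2)) (1/2) := by
        have := ((hL (1/2)).hasDerivWithinAt (s := Iic (1/2)))
        rw [hθ'h, zero_smul] at this
        refine this.congr (fun x hx => ?_) ?_
        · show (if x ≤ 1/2 then γ₁ (θ x) else γ₂ (σ x)) = γ₁ (θ x)
          rw [if_pos (mem_Iic.mp hx)]
        · show (if (1/2:ℝ) ≤ 1/2 then γ₁ (θ (1/2)) else γ₂ (σ (1/2))) = γ₁ (θ (1/2))
          rw [if_pos le_rfl]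
      have hright : HasDerivWithinAt η 0 (Ici (1/2)) (1/2) := by
        have := ((hR (1/2)).hasDerivWithinAt (s := Ici (1/2)))
        rw [hσ'h, zero_smul] at this
        refine this.congr (fun x hx => ?_) ?_
        · show (if x ≤ 1/2 then γ₁ (θ x) else γ₂ (σ x)) = γ₂ (σ x)
          rcases eq_or_lt_of_le (mem_Ici.mp hx) with h | h
          · rw [if_pos h.symm.le, ← h, hθh, hσh, g10, g20]
          · rw [if_neg (not_le.mpr h)]
        · show (if (1/2:ℝ) ≤ 1/2 then γ₁ (θ (1/2)) else γ₂ (σ (1/2))) = γ₂ (σ (1/2))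
          rw [if_pos le_rfl, hθh, hσh, g10, g20]
      have := hleft.union hright
      rw [Iic_union_Ici] at this
      exact hasDerivWithinAt_univ.mp this
    · have hev : η =ᶠ[nhds s] fun x => γ₂ (σ x) := by
        filter_upwards [Ioi_mem_nhds hs] with x hx
        show (if x ≤ 1/2 then γ₁ (θ x) else γ₂ (σ x)) = γ₂ (σ x)
        rw [if_neg (not_le.mpr (mem_Ioi.mp hx))]
      rw [hDdef]
      simp only [if_neg (not_le.mpr hs)]
      exact (hR s).congr_of_eventuallyEq hev
  have hderiv : deriv η = D := funext fun s => (hηD s).deriv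
  have hDcont : Continuous D := by
    rw [hDdef]
    refine Continuous.if_le ?_ ?_ continuous_id continuous_const ?_
    · exact ((bump_continuous.comp (continuous_const.mul continuous_id)).div_const
        _ |>.mul continuous_const).neg.smul
        (g1c.comp ((continuous_const.sub (rpm_continuous.comp
          (continuous_const.mul continuous_id)))))
    · exact ((bump_continuous.comp ((continuous_const.mul continuous_id).sub
        continuous_const)).div_const _ |>.mul continuous_const).smul
        (g2c.comp (rpm_continuous.comp ((continuous_const.mul continuous_id).sub
          continuous_const)))
    · intro x hx
      rw [show x = 1/2 from hx]
      rw [hθ'h, hσ'h, zero_smul, zero_smul]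
  refine ⟨η, ?_, ?_, ?_, fun s => (hηD s).differentiableAt, by rw [hderiv]; exact hDcont, ?_⟩
  · show (if (0:ℝ) ≤ 1/2 then γ₁ (θ 0) else γ₂ (σ 0)) = B
    rw [if_pos (by norm_num : (0:ℝ) ≤ 1/2), hθ0, g11]
  · show (if (1:ℝ) ≤ 1/2 then γ₁ (θ 1) else γ₂ (σ 1)) = C
    rw [if_neg (by norm_num : ¬ (1:ℝ) ≤ 1/2), hσ1, g21]
  · intro s
    show (if s ≤ 1/2 then γ₁ (θ s) else γ₂ (σ s)) ∈ _
    split_ifs <;> [exact g1u _; exact g2u _]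
  · -- length computation
    rw [hderiv]
    have hsplit : (∫ s in (0:ℝ)..1, frob (D s)) =
        (∫ s in (0:ℝ)..(1/2:ℝ), frob (D s)) + ∫ s in (1/2:ℝ)..1, frob (D s) := by
      refine (intervalIntegral.integral_add_adjacent_intervals ?_ ?_).symm
      · exact ((frob_continuous.comp hDcont)).intervalIntegrable _ _
      · exact ((frob_continuous.comp hDcont)).intervalIntegrable _ _
    rw [hsplit]
    have hgl : Continuous (fun u => frob (deriv γ₁ u)) := frob_continuous.comp g1c
    have hgr : Continuous (fun u => frob (deriv γ₂ u)) := frob_continuous.comp g2c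
    have hLhalf : (∫ s in (0:ℝ)..(1/2:ℝ), frob (D s)) =
        ∫ s in (0:ℝ)..(1:ℝ), frob (deriv γ₁ s) := by
      have hcongr : ∀ s ∈ uIcc (0:ℝ) (1/2), frob (D s) =
          (-(θ' s)) • ((fun u => frob (deriv γ₁ u)) ∘ θ) s := by
        intro s hs
        rw [uIcc_of_le (by norm_num)] at hs
        show frob (if s ≤ 1/2 then θ' s • deriv γ₁ (θ s) else σ' s • deriv γ₂ (σ s)) = _
        rw [if_pos hs.2, frob_smul_real, abs_of_nonpos (by
          show -(bump (2*s) / bumpC * 2) ≤ 0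
          rw [neg_nonpos]
          exact mul_nonneg (rpm_deriv_nonneg _) (by norm_num))]
        simp [Function.comp]
      rw [intervalIntegral.integral_congr hcongr]
      have : (∫ s in (0:ℝ)..(1/2:ℝ), (-(θ' s)) • ((fun u => frob (deriv γ₁ u)) ∘ θ) s) =
          - ∫ s in (0:ℝ)..(1/2:ℝ), (θ' s) • ((fun u => frob (deriv γ₁ u)) ∘ θ) s := by
        rw [← intervalIntegral.integral_neg]
        congr 1; funext s; rw [neg_smul]
      rw [this, intervalIntegral.integral_comp_smul_deriv
        (fun x _ => hθ x) ((continuous_neg.comp (((bump_continuous.comp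
          (continuous_const.mul continuous_id)).div_const _).mul
          continuous_const)).continuousOn) hgl]
      rw [hθ0, hθh, intervalIntegral.integral_symm]
      rw [neg_neg]
    have hRhalf : (∫ s in (1/2:ℝ)..1, frob (D s)) =
        ∫ s in (0:ℝ)..(1:ℝ), frob (deriv γ₂ s) := by
      have hcongr : ∀ s ∈ uIcc (1/2:ℝ) 1, frob (D s) =
          (σ' s) • ((fun u => frob (deriv γ₂ u)) ∘ σ) s := by
        intro s hs
        rw [uIcc_of_le (by norm_num)] at hs
        show frob (if s ≤ 1/2 then θ' s • deriv γ₁ (θ s) else σ' s • deriv γ₂ (σ s)) = _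
        rcases eq_or_lt_of_le hs.1 with h | h
        · rw [if_pos h.symm.le, ← h, hθ'h, hσ'h, zero_smul, frob_zero]
          simp [Function.comp]
        · rw [if_neg (not_le.mpr h), frob_smul_real, abs_of_nonneg (by
            show (0:ℝ) ≤ bump (2*s-1) / bumpC * 2
            exact mul_nonneg (rpm_deriv_nonneg _) (by norm_num))]
          simp [Function.comp]
      rw [intervalIntegral.integral_congr hcongr]
      rw [intervalIntegral.integral_comp_smul_deriv (fun x _ => hσ x)
        ((((bump_continuous.comp ((continuous_const.mul continuous_id).sub
          continuous_const)).div_const _).mul continuous_const)).continuousOn hgr]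
      rw [hσh, hσ1]
    rw [hLhalf, hRhalf]

/-- Deterministic core of the tightness theorem: the shortfall of `d_F(U(t),𝟙)` from
`∫₀ᵗ Λ` is controlled via the geodesic `exp(-i∫₀ᵗΛ ds · H)` and the perturbation bound. -/
theorem tightness_core {n : ℕ} (T ε : ℝ) (hT : 0 ≤ T) (hε : 0 ≤ ε)
    (H : Matrix (Fin n) (Fin n) ℂ) (hH : H.IsHermitian) (hHnorm : frob H = 1)
    (Λ : ℝ → ℝ) (hΛc : ContinuousOn Λ (Set.Icc 0 T))
    (hΛpos : ∀ t ∈ Set.Icc (0:ℝ) T, 0 ≤ Λ t)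
    (H₁ U : ℝ → Matrix (Fin n) (Fin n) ℂ)
    (hH₁c : ContinuousOn H₁ (Set.Icc 0 T))
    (hH₁h : ∀ t ∈ Set.Icc (0:ℝ) T, (H₁ t).IsHermitian)
    (hclose : ∀ t ∈ Set.Icc (0:ℝ) T, frob (H₁ t - Λ t • H) ≤ ε)
    (hU : ∀ t ∈ Set.Icc (0:ℝ) T, HasDerivAt U ((-Complex.I) • (H₁ t * U t)) t)
    (hU0 : U 0 = 1) :
    ∀ t ∈ Set.Icc (0:ℝ) T,
      (∫ s in (0:ℝ)..t, Λ s) - dF (U t) 1 ≤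
        dF (U t) (NormedSpace.exp (((∫ s in (0:ℝ)..t, Λ s : ℝ) : ℂ) • ((-Complex.I) • H)))
          + ((∫ s in (0:ℝ)..t, Λ s)
            - dF (NormedSpace.exp (((∫ s in (0:ℝ)..t, Λ s : ℝ) : ℂ) • ((-Complex.I) • H))) 1) ∧
      dF (U t) (NormedSpace.exp (((∫ s in (0:ℝ)..t, Λ s : ℝ) : ℂ) • ((-Complex.I) • H)))
          + ((∫ s in (0:ℝ)..t, Λ s)
            - dF (NormedSpace.exp (((∫ s in (0:ℝ)..t, Λ s : ℝ) : ℂ) • ((-Complex.I) • H))) 1)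
        ≤ ε * t + ((∫ s in (0:ℝ)..t, Λ s)
            - dF (NormedSpace.exp (((∫ s in (0:ℝ)..t, Λ s : ℝ) : ℂ) • ((-Complex.I) • H))) 1) := by
  intro t ht
  obtain ⟨ht0, htT⟩ := ht
  have hsmulℝℂ : ∀ (r : ℝ) (X : Matrix (Fin n) (Fin n) ℂ), r • X = (r:ℂ) • X := fun r X => by
    rw [← algebraMap_smul ℂ r X]; norm_num
  -- continuous extension of Λ
  set Λ' : ℝ → ℝ := fun x => Λ (projIcc 0 T hT x) with hΛ'def
  have hΛ'cont : Continuous Λ' := hΛc.restrict.comp continuous_projIcc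
  have hΛ'eq : ∀ x ∈ Icc (0:ℝ) T, Λ' x = Λ x := fun x hx => by
    rw [hΛ'def]; simp [projIcc_of_mem hT hx]
  set lam : ℝ → ℝ := fun x => ∫ u in (0:ℝ)..x, Λ' u with hlamdef
  have hlamd : ∀ x : ℝ, HasDerivAt lam (Λ' x) x := fun x =>
    intervalIntegral.integral_hasDerivAt_right (hΛ'cont.intervalIntegrable 0 x)
      (hΛ'cont.stronglyMeasurableAtFilter _ _) hΛ'cont.continuousAt
  have hlamt : lam t = ∫ s in (0:ℝ)..t, Λ s := by
    refine intervalIntegral.integral_congr fun x hx => ?_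
    rw [uIcc_of_le ht0] at hx
    exact hΛ'eq x ⟨hx.1, le_trans hx.2 htT⟩
  rw [← hlamt]
  -- basic objects
  set A : Matrix (Fin n) (Fin n) ℂ := Complex.I • H with hAdef
  set M : ℝ → Matrix (Fin n) (Fin n) ℂ := fun x => NormedSpace.exp (lam x • A) with hMdef
  set E : Matrix (Fin n) (Fin n) ℂ :=
    NormedSpace.exp (((lam t : ℝ) : ℂ) • ((-Complex.I) • H)) with hEdef
  have hEeq : E = NormedSpace.exp ((-(lam t)) • A) := by
    rw [hEdef]
    congr 1
    rw [hAdef, hsmulℝℂ (-(lam t)) (Complex.I • H), smul_smul, smul_smul]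
    congr 1
    push_cast
    ring
  -- skew-Hermitian exponentials are unitary
  have hskew : ∀ r : ℝ, ((r • A)ᴴ) = -(r • A) := by
    intro r
    rw [hAdef, hsmulℝℂ r (Complex.I • H), smul_smul, Matrix.conjTranspose_smul, hH.eq]
    rw [← neg_smul]
    congr 1
    simp [Complex.ext_iff]
  have hexp_unit : ∀ S : Matrix (Fin n) (Fin n) ℂ, Sᴴ = -S →
      NormedSpace.exp S ∈ Matrix.unitaryGroup (Fin n) ℂ := by
    intro S hS
    rw [Matrix.mem_unitaryGroup_iff', Matrix.star_eq_conjTranspose,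
      ← Matrix.exp_conjTranspose S, hS,
      ← Matrix.exp_add_of_commute (-S) S (Commute.neg_left (Commute.refl S)),
      neg_add_cancel]
    exact NormedSpace.exp_zero
  have hMunit : ∀ x : ℝ, M x ∈ Matrix.unitaryGroup (Fin n) ℂ := fun x =>
    hexp_unit _ (hskew (lam x))
  have hEunit : E ∈ Matrix.unitaryGroup (Fin n) ℂ := by
    rw [hEeq]; exact hexp_unit _ (hskew (-(lam t)))
  -- U is unitary and continuous on [0,T]
  have hUcont : ContinuousOn U (Icc 0 T) := fun x hx =>
    ((hU x hx).continuousAt).continuousWithinAt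
  have hUval : ∀ x ∈ Icc (0:ℝ) T, star (U x) * U x = 1 := by
    have hcont : ContinuousOn (fun y => star (U y) * U y) (Icc 0 T) :=
      (hUcont.star).mul hUcont
    have hder : ∀ x ∈ Ico (0:ℝ) T, HasDerivWithinAt (fun y => star (U y) * U y) 0 (Ici x) x := by
      intro x hx
      have hx' : x ∈ Icc (0:ℝ) T := ⟨hx.1, hx.2.le⟩
      have h1 := (hU x hx').star
      have h2 : star ((-Complex.I) • (H₁ x * U x)) = Complex.I • (star (U x) * H₁ x) := by
        rw [star_smul, StarMul.star_mul, Matrix.star_eq_conjTranspose (H₁ x), (hH₁h x hx').eq]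
        congr 1
        simp
      rw [h2] at h1
      have h3 := h1.mul (hU x hx')
      have hval : (Complex.I • (star (U x) * H₁ x)) * U x
          + star (U x) * ((-Complex.I) • (H₁ x * U x)) = 0 := by
        rw [smul_mul_assoc, mul_smul_comm, neg_smul, Matrix.mul_assoc]
        exact add_neg_cancel _
      rw [hval] at h3
      exact h3.hasDerivWithinAt
    intro x hx
    have := constant_of_has_deriv_right_zero hcont hder x hx
    rw [this, hU0, star_one, one_mul]
  have hUunit : ∀ x ∈ Icc (0:ℝ) T, U x ∈ Matrix.unitaryGroup (Fin n) ℂ := fun x hx =>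
    Matrix.mem_unitaryGroup_iff'.mpr (hUval x hx)
  -- the interaction-picture derivative
  have hMd : ∀ x : ℝ, HasDerivAt M (Λ' x • (M x * A)) x := fun x =>
    (hasDerivAt_exp_smul_const (𝕂 := ℝ) A (lam x)).scomp x (hlamd x)
  have hMcont : Continuous M := continuous_iff_continuousAt.2 fun x =>
    (hMd x).differentiableAt.continuousAt
  set Wd : ℝ → Matrix (Fin n) (Fin n) ℂ :=
    fun x => (Λ' x • (M x * A)) * U x + M x * ((-Complex.I) • (H₁ x * U x)) with hWddef
  have hWd : ∀ x ∈ Icc (0:ℝ) T, HasDerivAt (fun y => M y * U y) (Wd x) x := fun x hx =>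
    (hMd x).mul (hU x hx)
  have hWdeq : ∀ x : ℝ, Wd x = M x * (((-Complex.I) • (H₁ x - Λ' x • H)) * U x) := by
    intro x
    rw [hWddef]
    dsimp only
    rw [hAdef, hsmulℝℂ (Λ' x) (M x * (Complex.I • H)), hsmulℝℂ (Λ' x) H]
    simp only [smul_sub, sub_mul, mul_sub, smul_mul_assoc, mul_smul_comm, smul_smul,
      Matrix.mul_assoc]
    module
  have hWdbound : ∀ x ∈ Icc (0:ℝ) T, frob (Wd x) ≤ ε := by
    intro x hx
    rw [hWdeq x, frob_unitary_left (hMunit x), frob_unitary_right (hUunit x hx), frob_smul]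
    rw [hΛ'eq x hx]
    simpa using hclose x hx
  have hWdcont : ContinuousOn Wd (Icc (0:ℝ) T) := by
    rw [hWddef]
    exact (((hΛ'cont.continuousOn.smul ((hMcont.continuousOn).mul continuousOn_const)).mul
      hUcont).add ((hMcont.continuousOn).mul ((hH₁c.mul hUcont).const_smul (-Complex.I))))
  -- reparametrization
  set ρ : ℝ → ℝ := fun s => t * rpm (1 - s) with hρdef
  set ρ' : ℝ → ℝ := fun s => t * (bump (1 - s) / bumpC * -1) with hρ'def
  have hρd : ∀ s : ℝ, HasDerivAt ρ (ρ' s) s := fun s =>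
    ((rpm_hasDerivAt (1 - s)).comp s ((hasDerivAt_id s).const_sub 1)).const_mul t
  have hρmem : ∀ s : ℝ, ρ s ∈ Icc (0:ℝ) T := fun s =>
    ⟨mul_nonneg ht0 (rpm_mem_Icc _).1,
      le_trans (mul_le_of_le_one_right ht0 (rpm_mem_Icc _).2) htT⟩
  have hρcont : Continuous ρ :=
    continuous_const.mul (rpm_continuous.comp (continuous_const.sub continuous_id))
  have hρ0 : ρ 0 = t := by rw [hρdef]; norm_num [rpm_one]
  have hρ1 : ρ 1 = 0 := by rw [hρdef]; norm_num [rpm_zero]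
  have hM0 : M 0 = 1 := by
    rw [hMdef]
    dsimp only
    rw [hlamdef]
    dsimp only
    rw [intervalIntegral.integral_same, zero_smul]
    exact NormedSpace.exp_zero
  have hEMt : E * M t = 1 := by
    rw [hEeq, hMdef]
    dsimp only
    rw [← Matrix.exp_add_of_commute _ _ (((Commute.refl A).smul_left _).smul_right _),
      neg_smul, neg_add_cancel]
    exact NormedSpace.exp_zero
  -- path 1 : from U t to E
  set γ1 : ℝ → Matrix (Fin n) (Fin n) ℂ := fun s => E * (M (ρ s) * U (ρ s)) with hγ1def
  set G1 : ℝ → Matrix (Fin n) (Fin n) ℂ := fun s => ρ' s • (E * Wd (ρ s)) with hG1def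
  have hγ1d : ∀ s : ℝ, HasDerivAt γ1 (G1 s) s := by
    intro s
    have h := ((hWd (ρ s) (hρmem s)).scomp s (hρd s)).const_mul E
    rw [mul_smul_comm] at h
    exact h
  have hderiv1 : deriv γ1 = G1 := funext fun s => (hγ1d s).deriv
  have hWdρcont : Continuous fun s => Wd (ρ s) := hWdcont.comp_continuous hρcont hρmem
  have hG1cont : Continuous G1 := by
    rw [hG1def]
    exact (continuous_const.mul ((bump_continuous.comp
      (continuous_const.sub continuous_id)).div_const _ |>.mul continuous_const)).smul
      (continuous_const.mul hWdρcont)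
  have hγ10 : γ1 0 = U t := by
    rw [hγ1def]; dsimp only
    rw [hρ0, ← Matrix.mul_assoc, hEMt, Matrix.one_mul]
  have hγ11 : γ1 1 = E := by
    rw [hγ1def]; dsimp only
    rw [hρ1, hM0, hU0, Matrix.one_mul, Matrix.mul_one]
  have hγ1u : ∀ s : ℝ, γ1 s ∈ Matrix.unitaryGroup (Fin n) ℂ := fun s =>
    mul_mem hEunit (mul_mem (hMunit (ρ s)) (hUunit (ρ s) (hρmem s)))
  have hmem1 : (∫ s in (0:ℝ)..1, frob (deriv γ1 s)) ∈ PathSet (U t) E :=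
    ⟨γ1, hγ10, hγ11, hγ1u, fun s => (hγ1d s).differentiableAt,
      by rw [hderiv1]; exact hG1cont, rfl⟩
  -- length bound for path 1
  have hG1bound : ∀ s ∈ Icc (0:ℝ) 1, frob (G1 s) ≤ (ε * t) * (bump (1 - s) / bumpC) := by
    intro s _
    rw [hG1def]
    dsimp only
    rw [frob_smul_real, frob_unitary_left hEunit]
    have habs : |ρ' s| = t * (bump (1 - s) / bumpC) := by
      rw [hρ'def]
      dsimp only
      rw [abs_mul, abs_of_nonneg ht0, abs_mul, abs_of_nonneg (rpm_deriv_nonneg _)]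
      norm_num
    rw [habs]
    have h1 := hWdbound (ρ s) (hρmem s)
    have h2 : 0 ≤ t * (bump (1 - s) / bumpC) := mul_nonneg ht0 (rpm_deriv_nonneg _)
    nlinarith [frob_nonneg (Wd (ρ s))]
  have hbint : (∫ s in (0:ℝ)..1, bump (1 - s) / bumpC) = 1 := by
    have hder : ∀ s : ℝ, HasDerivAt (fun x : ℝ => -rpm (1 - x)) (bump (1 - s) / bumpC) s := by
      intro s
      have := ((rpm_hasDerivAt (1 - s)).comp s ((hasDerivAt_id s).const_sub 1)).neg
      exact this.congr_deriv (by ring)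
    rw [intervalIntegral.integral_eq_sub_of_hasDerivAt (fun x _ => hder x)
      (((bump_continuous.comp (continuous_const.sub continuous_id)).div_const
        _).intervalIntegrable 0 1)]
    simp [rpm_zero, rpm_one]
  have hlen1 : (∫ s in (0:ℝ)..1, frob (deriv γ1 s)) ≤ ε * t := by
    rw [hderiv1]
    have hstep : (∫ s in (0:ℝ)..1, frob (G1 s)) ≤
        ∫ s in (0:ℝ)..1, (ε * t) * (bump (1 - s) / bumpC) := by
      refine intervalIntegral.integral_mono_on (by norm_num)
        ((frob_continuous.comp hG1cont).intervalIntegrable 0 1)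
        ((continuous_const.mul ((bump_continuous.comp
          (continuous_const.sub continuous_id)).div_const _)).intervalIntegrable 0 1)
        hG1bound
    calc (∫ s in (0:ℝ)..1, frob (G1 s)) ≤
        ∫ s in (0:ℝ)..1, (ε * t) * (bump (1 - s) / bumpC) := hstep
      _ = (ε * t) * ∫ s in (0:ℝ)..1, bump (1 - s) / bumpC :=
        intervalIntegral.integral_const_mul _ _
      _ = ε * t := by rw [hbint, mul_one]
  -- path 2 : from U t to 1
  set γ2 : ℝ → Matrix (Fin n) (Fin n) ℂ := fun s => U (ρ s) with hγ2def
  set G2 : ℝ → Matrix (Fin n) (Fin n) ℂ :=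
    fun s => ρ' s • ((-Complex.I) • (H₁ (ρ s) * U (ρ s))) with hG2def
  have hγ2d : ∀ s : ℝ, HasDerivAt γ2 (G2 s) s := fun s =>
    (hU (ρ s) (hρmem s)).scomp s (hρd s)
  have hderiv2 : deriv γ2 = G2 := funext fun s => (hγ2d s).deriv
  have hG2cont : Continuous G2 := by
    rw [hG2def]
    exact (continuous_const.mul ((bump_continuous.comp
      (continuous_const.sub continuous_id)).div_const _ |>.mul continuous_const)).smul
      (((hH₁c.mul hUcont).const_smul (-Complex.I)).comp_continuous hρcont hρmem)
  have hγ20 : γ2 0 = U t := by rw [hγ2def]; dsimp only; rw [hρ0]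
  have hγ21 : γ2 1 = 1 := by rw [hγ2def]; dsimp only; rw [hρ1, hU0]
  have hmem2 : (∫ s in (0:ℝ)..1, frob (deriv γ2 s)) ∈ PathSet (U t) 1 :=
    ⟨γ2, hγ20, hγ21, fun s => hUunit (ρ s) (hρmem s), fun s => (hγ2d s).differentiableAt,
      by rw [hderiv2]; exact hG2cont, rfl⟩
  -- assembly
  have hdF1 : dF (U t) E = sInf (PathSet (U t) E) := rfl
  have hdF2 : dF (U t) 1 = sInf (PathSet (U t) (1 : Matrix (Fin n) (Fin n) ℂ)) := rfl
  have hdF3 : dF E 1 = sInf (PathSet E (1 : Matrix (Fin n) (Fin n) ℂ)) := rfl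
  have key2 : dF (U t) E ≤ ε * t := by
    rw [hdF1]
    exact le_trans (csInf_le (pathSet_bddBelow _ _) hmem1) hlen1
  have keyT : dF E 1 ≤ dF (U t) E + dF (U t) 1 := by
    have h2 : dF E 1 - dF (U t) E ≤ dF (U t) 1 := by
      rw [hdF2]
      refine le_csInf ⟨_, hmem2⟩ fun l₂ h₂ => ?_
      have h3 : dF E 1 - l₂ ≤ dF (U t) E := by
        rw [hdF1]
        refine le_csInf ⟨_, hmem1⟩ fun l₁ h₁ => ?_
        have h4 : dF E 1 ≤ l₁ + l₂ := by
          rw [hdF3]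
          exact csInf_le (pathSet_bddBelow _ _) (pathSet_concat h₁ h₂)
        linarith
      linarith
    linarith
  exact ⟨by linarith, by linarith⟩
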